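/- Let f ∈ k[X_1,…,X_r] be an irreducible polynomial such that the quotient group ℤ^r/Ξ_f is infinite cyclic. Then there exist integers n_1,…,n_r, not all zero, such that the greatest common divisor of the nonzero n_i equals 1 (equivalently, there is m ∈ ℤ^r with n_1 m_1 + ⋯ + n_r m_r = 1), and an irreducible univariate polynomial h ∈ k[t], such that f(X_1,…,X_r) = h(n_1 X_1 + ⋯ + n_r X_r). -/

import Mathlib

open MvPolynomial

noncomputable section

/-- Translation of a polynomial: `(τ_m f)(X) = f(X₁ + m₁, …, X_r + m_r)`. -/
def polyTranslate (k : Type*) [CommRing k] {r : ℕ} (m : Fin r → ℤ) :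
    MvPolynomial (Fin r) k →ₐ[k] MvPolynomial (Fin r) k :=
  aeval fun i => X i + C ((m i : ℤ) : k)

lemma polyTranslate_comp (k : Type*) [CommRing k] {r : ℕ} (m m' : Fin r → ℤ)
    (f : MvPolynomial (Fin r) k) :
    polyTranslate k m (polyTranslate k m' f) = polyTranslate k (m + m') f := by
  rw [← AlgHom.comp_apply]
  congr 1
  apply algHom_ext
  intro i
  simp only [polyTranslate, AlgHom.comp_apply, aeval_X, map_add, aeval_C, algebraMap_eq,
    Pi.add_apply, Int.cast_add]
  ring

lemma polyTranslate_zero (k : Type*) [CommRing k] {r : ℕ}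
    (f : MvPolynomial (Fin r) k) : polyTranslate k (0 : Fin r → ℤ) f = f := by
  have : polyTranslate k (0 : Fin r → ℤ) = AlgHom.id k _ := by
    apply algHom_ext
    intro i
    simp [polyTranslate]
  rw [this, AlgHom.id_apply]

/-- The stabilizer `Ξ_f = { m ∈ ℤ^r : τ_m f = f }` of `f` under translations. -/
def stabXi (k : Type*) [CommRing k] {r : ℕ} (f : MvPolynomial (Fin r) k) :
    AddSubgroup (Fin r → ℤ) where
  carrier := {m | polyTranslate k m f = f}
  zero_mem' := polyTranslate_zero k f
  add_mem' := by
    intro a b ha hb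
    show polyTranslate k (a + b) f = f
    rw [← polyTranslate_comp, hb, ha]
  neg_mem' := by
    intro a ha
    show polyTranslate k (-a) f = f
    conv_lhs => rw [← ha]
    rw [polyTranslate_comp, neg_add_cancel, polyTranslate_zero]

set_option linter.unusedSectionVars false

section Aux
variable {k : Type*} [Field k] [CharZero k] {r : ℕ}

lemma aeval_self_eq_eval (x : Fin r → k) (g : MvPolynomial (Fin r) k) :
    aeval x g = eval x g :=
  RingHom.congr_fun (coe_aeval_eq_eval x) g

lemma eval_aeval' (x : Fin r → k) (p : Fin r → MvPolynomial (Fin r) k)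
    (g : MvPolynomial (Fin r) k) :
    eval x (aeval p g) = eval (fun i => eval x (p i)) g := by
  have h1 : ((aeval x : MvPolynomial (Fin r) k →ₐ[k] k).comp (aeval p)) g
      = aeval (fun i => aeval x (p i)) g := by rw [comp_aeval]
  simp only [AlgHom.comp_apply, aeval_self_eq_eval] at h1
  simpa [aeval_self_eq_eval] using h1

lemma eval_polyTranslate (x : Fin r → k) (m : Fin r → ℤ) (g : MvPolynomial (Fin r) k) :
    eval x (polyTranslate k m g) = eval (fun i => x i + ((m i : ℤ) : k)) g := by
  rw [polyTranslate, eval_aeval']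
  simp

/-- Invariance under an integer translation extends to scalar multiples over `k`. -/
lemma eval_add_smul (f : MvPolynomial (Fin r) k) (w : Fin r → ℤ) (hw : w ∈ stabXi k f)
    (y : Fin r → k) (c : k) :
    eval (fun i => y i + ((w i : ℤ) : k) * c) f = eval y f := by
  set p : Polynomial k :=
    aeval (fun i => Polynomial.C (y i) + Polynomial.C ((w i : ℤ) : k) * Polynomial.X) f with hp
  have hpe : ∀ t : k, p.eval t = eval (fun i => y i + ((w i : ℤ) : k) * t) f := by
    intro t
    have h1 : ((Polynomial.aeval t : Polynomial k →ₐ[k] k).comp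
        (aeval (fun i => Polynomial.C (y i) + Polynomial.C ((w i : ℤ) : k) * Polynomial.X))) f
        = aeval (fun i => Polynomial.aeval t
            (Polynomial.C (y i) + Polynomial.C ((w i : ℤ) : k) * Polynomial.X)) f := by
      rw [comp_aeval]
    simp only [AlgHom.comp_apply, map_add, map_mul, Polynomial.aeval_C, Polynomial.aeval_X,
      Algebra.algebraMap_self, RingHom.id_apply] at h1
    rw [aeval_self_eq_eval] at h1
    have : (Polynomial.aeval t : Polynomial k →ₐ[k] k) p = p.eval t := by
      simp [Polynomial.coe_aeval_eq_eval]
    rw [this] at h1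
    rw [h1]
  have hint : ∀ z : ℤ, p.eval (z : k) = eval y f := by
    intro z
    have hz : (z • w) ∈ stabXi k f := AddSubgroup.zsmul_mem _ hw z
    have hz' : polyTranslate k (z • w) f = f := hz
    have harg : (fun i => y i + ((w i : ℤ) : k) * ((z : ℤ) : k))
        = fun i => y i + (((z • w) i : ℤ) : k) := by
      funext i
      simp only [Pi.smul_apply, smul_eq_mul]
      push_cast
      ring
    have h2 := eval_polyTranslate y (z • w) f
    rw [hz'] at h2
    rw [hpe, harg]
    exact h2.symm
  have hzero : p - Polynomial.C (eval y f) = 0 := by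
    apply Polynomial.eq_zero_of_infinite_isRoot
    apply Set.infinite_of_injective_forall_mem (f := fun z : ℤ => (z : k))
      (Int.cast_injective)
    intro z
    simp only [Set.mem_setOf_eq, Polynomial.IsRoot, Polynomial.eval_sub, Polynomial.eval_C,
      hint z, sub_self]
  rw [← hpe c]
  have hc : p.eval c - eval y f = 0 := by
    have := congrArg (Polynomial.eval c) hzero
    simpa using this
  exact sub_eq_zero.mp hc

lemma eval_add_sum (f : MvPolynomial (Fin r) k) (w : Fin r → (Fin r → ℤ))
    (hw : ∀ i, w i ∈ stabXi k f) (c : Fin r → k) (s : Finset (Fin r)) :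
    ∀ y : Fin r → k,
      eval (fun j => y j + ∑ i ∈ s, ((w i j : ℤ) : k) * c i) f = eval y f := by
  induction s using Finset.cons_induction with
  | empty => intro y; simp
  | cons a s ha ih =>
    intro y
    have step := eval_add_smul f (w a) (hw a) y (c a)
    have harg : (fun j => y j + ∑ i ∈ Finset.cons a s ha, ((w i j : ℤ) : k) * c i)
        = fun j => (y j + ((w a j : ℤ) : k) * c a) + ∑ i ∈ s, ((w i j : ℤ) : k) * c i := by
      funext j
      rw [Finset.sum_cons]
      ring
    rw [harg, ih (fun j => y j + ((w a j : ℤ) : k) * c a), step]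

end Aux


theorem irreducible_of_rank_one_stabilizer (k : Type*) [Field k] [CharZero k] {r : ℕ}
    (f : MvPolynomial (Fin r) k) (hf : Irreducible f)
    (hcyc : Nonempty (((Fin r → ℤ) ⧸ stabXi k f) ≃+ ℤ)) :
    ∃ (n : Fin r → ℤ) (h : Polynomial k),
      n ≠ 0 ∧ (∃ m : Fin r → ℤ, ∑ i, n i * m i = 1) ∧ Irreducible h ∧
      f = Polynomial.aeval (∑ i, C ((n i : ℤ) : k) * X i) h := by
  obtain ⟨φ⟩ := hcyc
  set π : (Fin r → ℤ) →+ ℤ :=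
    φ.toAddMonoidHom.comp (QuotientAddGroup.mk' (stabXi k f)) with hπdef
  set n : Fin r → ℤ := fun i => π (Pi.single i 1) with hn
  have hπ_eq : ∀ m : Fin r → ℤ, π m = ∑ i, n i * m i := by
    intro m
    conv_lhs => rw [← Finset.univ_sum_single m]
    rw [map_sum]
    refine Finset.sum_congr rfl fun i _ => ?_
    have hs : Pi.single i (m i) = m i • (Pi.single i (1 : ℤ) : Fin r → ℤ) := by
      funext j
      simp [Pi.single_apply, mul_ite]
    rw [hs, map_zsmul, smul_eq_mul, mul_comm]
  have hker : ∀ m, m ∈ stabXi k f ↔ ∑ i, n i * m i = 0 := by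
    intro m
    rw [← hπ_eq]
    constructor
    · intro hm
      have : ((m : (Fin r → ℤ) ⧸ stabXi k f)) = 0 := (QuotientAddGroup.eq_zero_iff m).2 hm
      simp [hπdef, QuotientAddGroup.mk'_apply, this]
    · intro hm
      have h0 : φ ((QuotientAddGroup.mk' (stabXi k f)) m) = 0 := hm
      have : ((QuotientAddGroup.mk' (stabXi k f)) m) = 0 := by
        apply φ.injective
        rw [h0, map_zero]
      exact (QuotientAddGroup.eq_zero_iff m).1 this
  obtain ⟨m₀, hm₀⟩ : ∃ m, π m = 1 := by
    obtain ⟨q, hq⟩ := φ.surjective 1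
    obtain ⟨m, hm⟩ := QuotientAddGroup.mk'_surjective (stabXi k f) q
    refine ⟨m, ?_⟩
    show φ (QuotientAddGroup.mk' (stabXi k f) m) = 1
    rw [hm, hq]
  have hm₀' : ∑ i, n i * m₀ i = 1 := by rw [← hπ_eq]; exact hm₀
  have hnne : n ≠ 0 := by
    intro h0
    rw [h0] at hm₀'
    simp at hm₀'
  set L : MvPolynomial (Fin r) k := ∑ i, C ((n i : ℤ) : k) * X i with hL
  -- the key identity: f(X) = f(m₀ · L(X))
  have key : aeval (fun i => C ((m₀ i : ℤ) : k) * L) f = f := by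
    apply MvPolynomial.funext
    intro x
    rw [eval_aeval']
    have hLx : eval x L = ∑ i, ((n i : ℤ) : k) * x i := by simp [hL]
    set w : Fin r → (Fin r → ℤ) := fun i => (Pi.single i 1 : Fin r → ℤ) - n i • m₀ with hw
    have hwmem : ∀ i, w i ∈ stabXi k f := by
      intro i
      rw [hker]
      have hv : ∀ j, w i j = (if j = i then 1 else 0) - n i * m₀ j := by
        intro j
        simp [hw, Pi.single_apply]
      simp only [hv]
      have h2 : ∑ j, n j * (n i * m₀ j) = n i * ∑ j, n j * m₀ j := by
        rw [Finset.mul_sum]; congr 1; funext j; ring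
      calc ∑ j, n j * ((if j = i then (1:ℤ) else 0) - n i * m₀ j)
          = ∑ j, (n j * (if j = i then (1:ℤ) else 0) - n j * (n i * m₀ j)) := by
            congr 1; funext j; ring
        _ = (∑ j, n j * (if j = i then (1:ℤ) else 0)) - ∑ j, n j * (n i * m₀ j) := by
            rw [Finset.sum_sub_distrib]
        _ = n i - n i * ∑ j, n j * m₀ j := by rw [h2]; congr 1; simp [mul_ite]
        _ = 0 := by rw [hm₀']; ring
    have hsum := eval_add_sum f w hwmem x Finset.univ
      (fun j => ((m₀ j : ℤ) : k) * eval x L)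
    have harg : (fun j => ((m₀ j : ℤ) : k) * eval x L + ∑ i, ((w i j : ℤ) : k) * x i) = x := by
      funext j
      have hwv : ∀ i, ((w i j : ℤ) : k)
          = (if j = i then (1:k) else 0) - ((n i : ℤ) : k) * ((m₀ j : ℤ) : k) := by
        intro i
        simp only [hw, Pi.sub_apply, Pi.smul_apply, smul_eq_mul, Pi.single_apply]
        push_cast
        by_cases hij : j = i <;> simp [hij]
      simp only [hwv, sub_mul]
      rw [Finset.sum_sub_distrib]
      have h1 : ∑ i, (if j = i then (1:k) else 0) * x i = x j := by simp [ite_mul]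
      have h2 : ∑ i, ((n i : ℤ) : k) * ((m₀ j : ℤ) : k) * x i
          = ((m₀ j : ℤ) : k) * eval x L := by
        rw [hLx, Finset.mul_sum]
        congr 1; funext i; ring
      rw [h1, h2]
      ring
    rw [harg] at hsum
    rw [hsum]
    have hfun : (fun i => eval x (C ((m₀ i : ℤ) : k) * L))
        = fun j => ((m₀ j : ℤ) : k) * eval x L := by
      funext i
      simp
    rw [hfun]
  -- the univariate polynomial h
  set ψ : MvPolynomial (Fin r) k →ₐ[k] Polynomial k :=
    aeval (fun i => Polynomial.C ((m₀ i : ℤ) : k) * Polynomial.X) with hψ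
  set h : Polynomial k := ψ f with hh
  have hcomp : ∀ g : MvPolynomial (Fin r) k,
      Polynomial.aeval L (ψ g) = aeval (fun i => C ((m₀ i : ℤ) : k) * L) g := by
    intro g
    have h1 : ((Polynomial.aeval L : Polynomial k →ₐ[k] MvPolynomial (Fin r) k).comp ψ) g
        = aeval (fun i => Polynomial.aeval L
            (Polynomial.C ((m₀ i : ℤ) : k) * Polynomial.X)) g := by
      rw [hψ, comp_aeval]
    simpa [algebraMap_eq] using h1
  have hfeq : f = Polynomial.aeval L h := by rw [hh, hcomp, key]
  have hψL : ψ L = Polynomial.X := by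
    rw [hL, map_sum]
    have : ∀ i, ψ (C ((n i : ℤ) : k) * X i)
        = Polynomial.C (((n i : ℤ) : k) * ((m₀ i : ℤ) : k)) * Polynomial.X := by
      intro i
      simp [hψ, algebraMap_eq, mul_assoc]
    simp only [this]
    rw [← Finset.sum_mul, ← map_sum]
    have : (∑ i, ((n i : ℤ) : k) * ((m₀ i : ℤ) : k)) = 1 := by
      have : ((∑ i, n i * m₀ i : ℤ) : k) = ((1 : ℤ) : k) := by rw [hm₀']
      push_cast at this
      simpa using this
    rw [this]
    simp
  have hretr : ∀ p : Polynomial k, ψ (Polynomial.aeval L p) = p := by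
    intro p
    have h1 : (ψ.comp (Polynomial.aeval L : Polynomial k →ₐ[k] MvPolynomial (Fin r) k)) p
        = Polynomial.aeval (ψ L) p := by
      rw [← Polynomial.aeval_algHom]
    rw [hψL, Polynomial.aeval_X_left] at h1
    simpa using h1
  have hirr : Irreducible h := by
    constructor
    · intro hu
      exact hf.not_isUnit (hfeq ▸ hu.map (Polynomial.aeval L))
    · intro p q hpq
      have hfpq : f = Polynomial.aeval L p * Polynomial.aeval L q := by
        rw [hfeq, hpq, map_mul]
      rcases hf.isUnit_or_isUnit hfpq with hp | hq
      · left
        have := hp.map ψ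
        rwa [hretr] at this
      · right
        have := hq.map ψ
        rwa [hretr] at this
  exact ⟨n, h, hnne, ⟨m₀, hm₀'⟩, hirr, hfeq⟩
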